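/- Consider scheduling on a single parallel-batching machine with incompatible families, where each family j contains |N_j| jobs, each job i has size v_i ≤ V, and all jobs of family j have processing time q_j. Define N_j^b as the largest number such that the N_j^b largest jobs of family j fit together within capacity V, and let B_j = ⌈|N_j| / N_j^b⌉. Then there exists an optimal schedule minimizing total weighted completion time in which the number of batches used by family j is at most B_j for every family j. -/

import Mathlib

/-- A batch in a sequence: a family label together with the set of jobs loaded in it. -/
abbrev Batch (ι : Type*) (m : ℕ) := Fin m × Finset ι

/-- A feasible schedule on a single parallel-batching machine with incompatible
families: an ordered list of batches, each containing jobs of its own family only,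
respecting the machine capacity `V`, nonempty, and such that every job is assigned
to exactly one batch. -/
structure BatchSchedule {ι : Type*} (m : ℕ) (fam : ι → Fin m) (v : ι → ℝ) (V : ℝ) where
  batches : List (Batch ι m)
  mem_family : ∀ b ∈ batches, ∀ i ∈ b.2, fam i = b.1
  capacity : ∀ b ∈ batches, ∑ i ∈ b.2, v i ≤ V
  nonempty : ∀ b ∈ batches, b.2.Nonempty
  partition : ∀ i : ι, ∃! k : Fin batches.length, i ∈ (batches.get k).2

/-- Total weighted completion time of a sequence of batches processed back to back
from time 0: the `k`-th batch completes at the sum of the processing times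
`q j` of the families of batches `0,…,k`. -/
noncomputable def batchObj {ι : Type*} {m : ℕ} (q : Fin m → ℝ) (w : ι → ℝ)
    (bs : List (Batch ι m)) : ℝ :=
  ∑ k : Fin bs.length, (∑ i ∈ (bs.get k).2, w i) *
    (∑ l : Fin bs.length, if l.1 ≤ k.1 then q (bs.get l).1 else 0)

namespace BatchAux

variable {ι : Type*} {m : ℕ}

/-- total weight of a list of batches -/
noncomputable def Wt (w : ι → ℝ) (bs : List (Batch ι m)) : ℝ :=
  (bs.map fun b => ∑ i ∈ b.2, w i).sum

/-- total processing time of a list of batches -/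
noncomputable def Tt (q : Fin m → ℝ) (bs : List (Batch ι m)) : ℝ :=
  (bs.map fun b => q b.1).sum

@[simp] lemma Wt_nil (w : ι → ℝ) : Wt w ([] : List (Batch ι m)) = 0 := by simp [Wt]
@[simp] lemma Wt_cons (w : ι → ℝ) (b : Batch ι m) (bs : List (Batch ι m)) :
    Wt w (b :: bs) = (∑ i ∈ b.2, w i) + Wt w bs := by simp [Wt]
@[simp] lemma Wt_append (w : ι → ℝ) (P Q : List (Batch ι m)) :
    Wt w (P ++ Q) = Wt w P + Wt w Q := by simp [Wt]
@[simp] lemma Tt_nil (q : Fin m → ℝ) : Tt q ([] : List (Batch ι m)) = 0 := by simp [Tt]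
@[simp] lemma Tt_cons (q : Fin m → ℝ) (b : Batch ι m) (bs : List (Batch ι m)) :
    Tt q (b :: bs) = q b.1 + Tt q bs := by simp [Tt]
@[simp] lemma Tt_append (q : Fin m → ℝ) (P Q : List (Batch ι m)) :
    Tt q (P ++ Q) = Tt q P + Tt q Q := by simp [Tt]

lemma Wt_nonneg (w : ι → ℝ) (hw : ∀ i, 0 ≤ w i) (bs : List (Batch ι m)) : 0 ≤ Wt w bs := by
  apply List.sum_nonneg
  intro a ha
  simp only [List.mem_map] at ha
  obtain ⟨b, _, rfl⟩ := ha
  exact Finset.sum_nonneg fun i _ => hw i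

lemma Tt_nonneg (q : Fin m → ℝ) (hq : ∀ j, 0 ≤ q j) (bs : List (Batch ι m)) : 0 ≤ Tt q bs := by
  apply List.sum_nonneg
  intro a ha
  simp only [List.mem_map] at ha
  obtain ⟨b, _, rfl⟩ := ha
  exact hq _

lemma sum_get_eq_sum_map {α : Type*} (g : α → ℝ) (bs : List α) :
    ∑ k : Fin bs.length, g (bs.get k) = (bs.map g).sum := by
  induction bs with
  | nil => simp
  | cons b t ih =>
      show (∑ k : Fin (t.length + 1), g ((b :: t).get k)) = (List.map g (b :: t)).sum
      rw [Fin.sum_univ_succ]; simp [ih]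

@[simp] lemma batchObj_nil (q : Fin m → ℝ) (w : ι → ℝ) :
    batchObj q w ([] : List (Batch ι m)) = 0 := by simp [batchObj]

lemma batchObj_cons (q : Fin m → ℝ) (w : ι → ℝ) (b : Batch ι m) (bs : List (Batch ι m)) :
    batchObj q w (b :: bs) = q b.1 * ((∑ i ∈ b.2, w i) + Wt w bs) + batchObj q w bs := by
  unfold batchObj
  show (∑ k : Fin (bs.length + 1), (∑ i ∈ ((b :: bs).get k).2, w i) *
      (∑ l : Fin (bs.length + 1), if l.1 ≤ k.1 then q ((b :: bs).get l).1 else 0)) = _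
  rw [Fin.sum_univ_succ]
  simp only [Fin.sum_univ_succ, Fin.val_zero, Fin.val_succ, List.get_cons_zero,
    List.get_cons_succ, Nat.le_zero, Nat.zero_le, if_true, Nat.succ_ne_zero,
    Nat.add_le_add_iff_right, Nat.succ_le_succ_iff, if_false,
    Finset.sum_const_zero, add_zero]
  simp only [show ∀ x : Fin bs.length, (b :: bs).get x.succ = bs.get x from fun _ => rfl]
  unfold Wt
  rw [← sum_get_eq_sum_map (fun b : Batch ι m => ∑ i ∈ b.2, w i) bs]
  simp only [mul_add]
  rw [Finset.sum_add_distrib, ← Finset.sum_mul]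
  ring

lemma batchObj_append (q : Fin m → ℝ) (w : ι → ℝ) (P Q : List (Batch ι m)) :
    batchObj q w (P ++ Q) = batchObj q w P + Tt q P * Wt w Q + batchObj q w Q := by
  induction P with
  | nil => simp
  | cons b t ih => simp only [List.cons_append, batchObj_cons, ih, Wt_append, Tt_cons]; ring

end BatchAux

namespace BatchAux2
variable {ι : Type*} [Fintype ι] [DecidableEq ι] {m : ℕ}

-- partition characterization
lemma partition_iff (bs : List ((Fin m) × Finset ι)) :
    (∀ i : ι, ∃! k : Fin bs.length, i ∈ (bs.get k).2) ↔
    (bs.Pairwise fun a b => Disjoint a.2 b.2) ∧ ∀ i : ι, ∃ b ∈ bs, i ∈ b.2 := by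
  constructor
  · intro h
    refine ⟨List.pairwise_iff_get.2 fun k l hkl => ?_, fun i => ?_⟩
    · rw [Finset.disjoint_left]
      intro i hik hil
      obtain ⟨k0, _, hu⟩ := h i
      have := (hu k hik).trans (hu l hil).symm
      exact absurd this (ne_of_lt hkl)
    · obtain ⟨k, hk, -⟩ := h i
      exact ⟨bs.get k, bs.get_mem _, hk⟩
  · rintro ⟨hd, hc⟩ i
    obtain ⟨b, hb, hib⟩ := hc i
    obtain ⟨k, hk⟩ := List.mem_iff_get.1 hb
    have hib' : i ∈ (bs.get k).2 := by rw [hk]; exact hib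
    refine ⟨k, hib', fun l hl => ?_⟩
    by_contra hne
    rcases lt_or_gt_of_ne hne with h1 | h1
    · exact (Finset.disjoint_left.1 (List.pairwise_iff_get.1 hd l k h1)) hl hib'
    · exact (Finset.disjoint_left.1 (List.pairwise_iff_get.1 hd k l h1)) hib' hl

lemma sum_map_card_ge (c : ℕ) (l : List ℕ) (h : ∀ a ∈ l, c ≤ a) : c * l.length ≤ l.sum := by
  induction l with
  | nil => simp
  | cons a t ih =>
      simp only [List.length_cons, List.sum_cons, Nat.mul_succ]
      have := ih fun x hx => h x (List.mem_cons_of_mem _ hx)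
      have := h a (List.mem_cons_self)
      omega

lemma mem_foldr_union (L : List ((Fin m) × Finset ι)) (i : ι) :
    i ∈ L.foldr (fun b s => b.2 ∪ s) (∅ : Finset ι) ↔ ∃ b ∈ L, i ∈ b.2 := by
  induction L with
  | nil => simp
  | cons a t ih => simp [ih]

lemma card_foldr_union (L : List ((Fin m) × Finset ι))
    (h : L.Pairwise fun a b => Disjoint a.2 b.2) :
    (L.foldr (fun b s => b.2 ∪ s) (∅ : Finset ι)).card = (L.map fun b => b.2.card).sum := by
  induction L with
  | nil => simp
  | cons a t ih =>
      rw [List.pairwise_cons] at h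
      simp only [List.foldr_cons, List.map_cons, List.sum_cons]
      rw [Finset.card_union_of_disjoint, ih h.2]
      rw [Finset.disjoint_left]
      intro i hia hif
      obtain ⟨b, hb, hib⟩ := (mem_foldr_union t i).1 hif
      exact Finset.disjoint_left.1 (h.1 b hb) hia hib

lemma pair_sublist_decomp {α : Type*} {x y : α} {l : List α} (h : [x, y].Sublist l) :
    ∃ A C D : List α, l = A ++ x :: (C ++ y :: D) := by
  rw [List.cons_sublist_iff] at h
  obtain ⟨r₁, r₂, rfl, hx, hy⟩ := h
  rw [List.singleton_sublist] at hy
  obtain ⟨A, A₂, rfl⟩ := List.append_of_mem hx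
  obtain ⟨C₁, D, rfl⟩ := List.append_of_mem hy
  exact ⟨A, A₂ ++ C₁, D, by simp⟩

end BatchAux2
namespace BatchAux3
lemma pairwise_exchange {α : Type*} [DecidableEq α] {m : ℕ}
    {A C D : List ((Fin m) × Finset α)} {x y x' y' : (Fin m) × Finset α}
    (hx' : x'.2 ⊆ x.2 ∪ y.2) (hy' : y'.2 ⊆ y.2) (hxy' : Disjoint x'.2 y'.2)
    (h : (A ++ x :: (C ++ y :: D)).Pairwise fun a b => Disjoint a.2 b.2) :
    (A ++ x' :: (C ++ y' :: D)).Pairwise fun a b => Disjoint a.2 b.2 := by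
  simp only [List.pairwise_append, List.pairwise_cons, List.mem_append, List.mem_cons] at h ⊢
  obtain ⟨hA, ⟨hxr, hC, ⟨hyD, hD⟩, hCyD⟩, hAr⟩ := h
  have key' : ∀ t : Finset α, Disjoint x.2 t → Disjoint y.2 t → Disjoint x'.2 t := fun t h1 h2 =>
    Finset.disjoint_of_subset_left hx' (Finset.disjoint_union_left.2 ⟨h1, h2⟩)
  have keyy : ∀ t : Finset α, Disjoint y.2 t → Disjoint y'.2 t := fun t h1 =>
    Finset.disjoint_of_subset_left hy' h1
  refine ⟨hA, ⟨?_, hC, ⟨?_, hD⟩, ?_⟩, ?_⟩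
  · rintro a' (ha' | rfl | ha')
    · exact key' _ (hxr a' (Or.inl ha')) (hCyD a' ha' y (Or.inl rfl)).symm
    · exact hxy'
    · exact key' _ (hxr a' (Or.inr (Or.inr ha'))) (hyD a' ha')
  · intro a' ha'; exact keyy _ (hyD a' ha')
  · rintro a ha b (rfl | hb)
    · exact (keyy _ (hCyD a ha y (Or.inl rfl)).symm).symm
    · exact hCyD a ha b (Or.inr hb)
  · rintro a ha b (rfl | hb | rfl | hb)
    · exact (key' _ (hAr a ha x (Or.inl rfl)).symm
        (hAr a ha y (Or.inr (Or.inr (Or.inl rfl)))).symm).symm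
    · exact hAr a ha b (Or.inr (Or.inl hb))
    · exact (keyy _ (hAr a ha y (Or.inr (Or.inr (Or.inl rfl)))).symm).symm
    · exact hAr a ha b (Or.inr (Or.inr (Or.inr hb)))
end BatchAux3

open BatchAux BatchAux2 BatchAux3

/-- With `Nb j` such that any set of at most `Nb j` jobs of family `j`
fits within capacity, and `B j = ⌈|N_j| / Nb j⌉`, there exists an optimal schedule
(minimizing total weighted completion time) using at most `B j` batches of each
family `j`. -/
theorem exists_optimal_schedule_with_few_batches
    {ι : Type*} [Fintype ι] [DecidableEq ι] {m : ℕ}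
    (fam : ι → Fin m) (v w : ι → ℝ) (V : ℝ) (q : Fin m → ℝ)
    (hq : ∀ j, 0 < q j) (hw : ∀ i, 0 < w i)
    (hv0 : ∀ i, 0 ≤ v i) (hvV : ∀ i, v i ≤ V)
    (Nb : Fin m → ℕ) (hNb1 : ∀ j, 1 ≤ Nb j)
    (hNb : ∀ j, ∀ S : Finset ι, (∀ i ∈ S, fam i = j) → S.card ≤ Nb j →
      ∑ i ∈ S, v i ≤ V)
    (B : Fin m → ℕ)
    (hB : ∀ j, B j = ((Finset.univ.filter fun i => fam i = j).card + Nb j - 1) / Nb j) :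
    ∃ σ : BatchSchedule m fam v V,
      (∀ σ' : BatchSchedule m fam v V,
        batchObj q w σ.batches ≤ batchObj q w σ'.batches) ∧
      ∀ j, (σ.batches.filter fun b => b.1 = j).length ≤ B j := by
  classical
  have cover : ∀ σ : BatchSchedule m fam v V, ∀ i : ι, ∃ b ∈ σ.batches, i ∈ b.2 :=
    fun σ => ((partition_iff σ.batches).1 σ.partition).2
  have disj : ∀ σ : BatchSchedule m fam v V,
      σ.batches.Pairwise fun a b => Disjoint a.2 b.2 :=
    fun σ => ((partition_iff σ.batches).1 σ.partition).1
  -- length bound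
  have hlen : ∀ σ : BatchSchedule m fam v V, σ.batches.length ≤ Fintype.card ι := by
    intro σ
    have H : ∀ k : Fin σ.batches.length, ∃ i, i ∈ (σ.batches.get k).2 :=
      fun k => σ.nonempty _ (σ.batches.get_mem _)
    choose f hf using H
    have hinj : Function.Injective f := by
      intro k1 k2 he
      obtain ⟨k0, -, hu⟩ := σ.partition (f k1)
      have h1 := hu k1 (hf k1)
      have h2 := hu k2 (by rw [he]; exact hf k2)
      rw [h1, h2]
    simpa using Fintype.card_le_of_injective f hinj
  -- a schedule exists
  have hσ0 : Nonempty (BatchSchedule m fam v V) := by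
    refine ⟨⟨Finset.univ.toList.map (fun i => (fam i, ({i} : Finset ι))), ?_, ?_, ?_, ?_⟩⟩
    · intro b hb i hi
      obtain ⟨i0, -, rfl⟩ := List.mem_map.1 hb
      simp only [Finset.mem_singleton] at hi; subst hi; rfl
    · intro b hb
      obtain ⟨i0, -, rfl⟩ := List.mem_map.1 hb
      simpa using hvV i0
    · intro b hb
      obtain ⟨i0, -, rfl⟩ := List.mem_map.1 hb
      exact ⟨i0, Finset.mem_singleton_self i0⟩
    · intro i
      have hnd := Finset.nodup_toList (Finset.univ : Finset ι)
      have hmem : i ∈ Finset.univ.toList := Finset.mem_toList.2 (Finset.mem_univ i)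
      obtain ⟨n, hn, hni⟩ := List.mem_iff_getElem.1 hmem
      have hlen' : (Finset.univ.toList.map
          (fun i => (fam i, ({i} : Finset ι)))).length = Finset.univ.toList.length :=
        List.length_map _
      refine ⟨⟨n, by omega⟩, ?_, ?_⟩
      · simp only [List.get_eq_getElem, List.getElem_map]
        simp [hni]
      · intro k hk
        simp only [List.get_eq_getElem, List.getElem_map, Finset.mem_singleton] at hk
        apply Fin.ext
        have hgi := List.nodup_iff_injective_get.1 hnd
        have h2 : Finset.univ.toList.get ⟨k.1, by omega⟩ = Finset.univ.toList.get ⟨n, hn⟩ := by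
          simp only [List.get_eq_getElem]
          rw [hni, ← hk]
        simpa using congrArg Fin.val (hgi h2)
  -- choose an optimal schedule
  obtain ⟨σ0⟩ := hσ0
  have hSfin : (Set.range fun σ : BatchSchedule m fam v V => σ.batches).Finite :=
    Set.Finite.subset (List.finite_length_le _ (Fintype.card ι))
      (by rintro _ ⟨σ, rfl⟩; exact hlen σ)
  obtain ⟨bsm, ⟨σ, hσ⟩, hmin⟩ := Set.exists_min_image _ (batchObj q w) hSfin ⟨σ0.batches, σ0, rfl⟩
  have hopt : ∀ σ' : BatchSchedule m fam v V,
      batchObj q w σ.batches ≤ batchObj q w σ'.batches := by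
    intro σ'
    have hσ' : σ.batches = bsm := hσ
    rw [hσ']; exact hmin _ ⟨σ', rfl⟩
  refine ⟨σ, hopt, fun j => ?_⟩
  by_contra hKc
  push_neg at hKc
  set L := σ.batches.filter (fun b => b.1 = j) with hLdef
  have hdisjL : L.Pairwise (fun a b => Disjoint a.2 b.2) :=
    List.Pairwise.sublist (List.filter_sublist) (disj σ)
  have hmemL : ∀ b ∈ L, b ∈ σ.batches ∧ b.1 = j := by
    intro b hb
    have := List.mem_filter.1 hb
    exact ⟨this.1, by simpa using this.2⟩
  -- job count of family j
  have hn : (Finset.univ.filter fun i => fam i = j).card = (L.map fun b => b.2.card).sum := by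
    rw [← card_foldr_union L hdisjL]
    congr 1
    ext i
    rw [mem_foldr_union]
    simp only [Finset.mem_filter, Finset.mem_univ, true_and]
    constructor
    · intro hij
      obtain ⟨b, hb, hib⟩ := cover σ i
      have hbj : b.1 = j := (σ.mem_family b hb i hib).symm.trans hij
      exact ⟨b, List.mem_filter.2 ⟨hb, by simpa using hbj⟩, hib⟩
    · rintro ⟨b, hb, hib⟩
      obtain ⟨hbbs, hbj⟩ := hmemL b hb
      rw [← hbj]; exact σ.mem_family b hbbs i hib
  have hLne : L ≠ [] := by
    intro h; rw [h] at hKc; simp at hKc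
  have hNbpos : 0 < Nb j := hNb1 j
  by_cases hall : ∀ x ∈ L.dropLast, Nb j ≤ x.2.card
  · -- all early batches are full: L.length ≤ B j, contradiction
    have hlast := List.dropLast_append_getLast hLne
    have hzL : L.getLast hLne ∈ L := List.getLast_mem hLne
    have hz1 : 1 ≤ (L.getLast hLne).2.card :=
      Finset.card_pos.2 (σ.nonempty _ (hmemL _ hzL).1)
    have h1 : Nb j * (L.length - 1) ≤ (L.dropLast.map fun b => b.2.card).sum := by
      have := sum_map_card_ge (Nb j) (L.dropLast.map fun b => b.2.card)
        (by intro a ha; obtain ⟨b, hb, rfl⟩ := List.mem_map.1 ha; exact hall b hb)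
      simpa [List.length_dropLast] using this
    have h2 : (L.map fun b => b.2.card).sum
        = (L.dropLast.map fun b => b.2.card).sum + (L.getLast hLne).2.card := by
      conv_lhs => rw [← hlast]
      simp
    have hsum : Nb j * (L.length - 1) + 1 ≤ (L.map fun b => b.2.card).sum := by
      rw [h2]; exact Nat.add_le_add h1 hz1
    have hK1 : 1 ≤ L.length := List.length_pos_iff.2 hLne
    have e : L.length * Nb j = Nb j * (L.length - 1) + Nb j := by
      obtain ⟨a, ha⟩ := Nat.exists_eq_add_of_le hK1
      rw [ha, Nat.add_sub_cancel_left]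
      ring
    have final : L.length ≤ B j := by
      rw [hB j, hn, Nat.le_div_iff_mul_le hNbpos, e]
      generalize Nb j * (L.length - 1) = P at hsum ⊢
      omega
    omega
  · -- exchange argument
    push_neg at hall
    obtain ⟨x, hxdl, hxcard⟩ := hall
    have hy : [x, L.getLast hLne].Sublist σ.batches := by
      have h1 : [x].Sublist L.dropLast := List.singleton_sublist.2 hxdl
      have h2 := List.Sublist.append h1 (List.Sublist.refl [L.getLast hLne])
      rw [List.dropLast_append_getLast hLne] at h2
      exact h2.trans (List.filter_sublist)
    set y := L.getLast hLne with hydef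
    have hxL : x ∈ L := List.Sublist.mem hxdl (List.dropLast_sublist L)
    have hyL : y ∈ L := List.getLast_mem hLne
    obtain ⟨hxbs, hxj⟩ := hmemL x hxL
    obtain ⟨hybs, hyj⟩ := hmemL y hyL
    obtain ⟨A, C, D, hdec⟩ := pair_sublist_decomp hy
    obtain ⟨i, hiy⟩ := σ.nonempty y hybs
    have hfami : fam i = j := by rw [σ.mem_family y hybs i hiy, hyj]
    have hxy : Disjoint x.2 y.2 := by
      have hp := List.Pairwise.sublist hy (disj σ)
      exact (List.pairwise_cons.1 hp).1 y (by simp)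
    have hix : i ∉ x.2 := Finset.disjoint_right.1 hxy hiy
    have hdisjdec := disj σ
    rw [hdec] at hdisjdec
    have hsubABCD : ∀ b : Batch ι m, (b ∈ A ∨ b ∈ C ∨ b ∈ D) → b ∈ σ.batches := by
      intro b hb; rw [hdec]
      simp only [List.mem_append, List.mem_cons]
      tauto
    -- facts about the modified first batch x'
    have hfamx' : ∀ i' ∈ insert i x.2, fam i' = j := by
      intro i' hi'
      rcases Finset.mem_insert.1 hi' with rfl | hi'
      · exact hfami
      · rw [σ.mem_family x hxbs i' hi', hxj]
    have hcardx' : (insert i x.2).card ≤ Nb j := by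
      have := Finset.card_insert_le i x.2
      omega
    have hcapx' : ∑ i' ∈ insert i x.2, v i' ≤ V := hNb j _ hfamx' hcardx'
    have herase := Finset.sum_erase_add y.2 w hiy
    have hq0 : ∀ j', (0:ℝ) ≤ q j' := fun j' => (hq j').le
    have hw0 : ∀ i', (0:ℝ) ≤ w i' := fun i' => (hw i').le
    by_cases hsing : y.2 = {i}
    · -- remove batch y entirely
      set bs' : List (Batch ι m) := A ++ (j, insert i x.2) :: (C ++ D) with hbs'
      have hpw : bs'.Pairwise fun a b => Disjoint a.2 b.2 := by
        have hpw2 : (A ++ (j, insert i x.2) :: (C ++ (j, (∅ : Finset ι)) :: D)).Pairwise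
            (fun a b => Disjoint a.2 b.2) := by
          apply pairwise_exchange (x := x) (y := y) _ _ _ hdisjdec
          · intro i' hi'
            rcases Finset.mem_insert.1 hi' with rfl | hi'
            · exact Finset.mem_union_right _ hiy
            · exact Finset.mem_union_left _ hi'
          · simp
          · simp
        refine List.Pairwise.sublist ?_ hpw2
        exact ((((List.sublist_cons_self _ D).append_left C).cons₂ _).append_left A)
      have hcov : ∀ i0 : ι, ∃ b ∈ bs', i0 ∈ b.2 := by
        intro i0
        obtain ⟨b, hb, hib⟩ := cover σ i0
        rw [hdec] at hb
        simp only [List.mem_append, List.mem_cons] at hb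
        rcases hb with hb | hbx | hb | hby | hb
        · exact ⟨b, by simp [hbs', hb], hib⟩
        · rw [hbx] at hib
          exact ⟨(j, insert i x.2), by simp [hbs'], Finset.mem_insert_of_mem hib⟩
        · exact ⟨b, by simp [hbs', hb], hib⟩
        · refine ⟨(j, insert i x.2), by simp [hbs'], ?_⟩
          rw [hby, hsing] at hib
          simp only [Finset.mem_singleton] at hib
          subst hib
          exact Finset.mem_insert_self _ _
        · exact ⟨b, by simp [hbs', hb], hib⟩
      refine absurd (hopt ⟨bs', ?_, ?_, ?_, ?_⟩) (not_le.2 ?_)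
      · intro b hb
        rw [hbs'] at hb
        simp only [List.mem_append, List.mem_cons] at hb
        rcases hb with hb | rfl | hb | hb
        · exact σ.mem_family b (hsubABCD b (by tauto))
        · intro i' hi'; exact hfamx' i' hi'
        · exact σ.mem_family b (hsubABCD b (by tauto))
        · exact σ.mem_family b (hsubABCD b (by tauto))
      · intro b hb
        rw [hbs'] at hb
        simp only [List.mem_append, List.mem_cons] at hb
        rcases hb with hb | rfl | hb | hb
        · exact σ.capacity b (hsubABCD b (by tauto))
        · exact hcapx'
        · exact σ.capacity b (hsubABCD b (by tauto))
        · exact σ.capacity b (hsubABCD b (by tauto))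
      · intro b hb
        rw [hbs'] at hb
        simp only [List.mem_append, List.mem_cons] at hb
        rcases hb with hb | rfl | hb | hb
        · exact σ.nonempty b (hsubABCD b (by tauto))
        · exact Finset.insert_nonempty _ _
        · exact σ.nonempty b (hsubABCD b (by tauto))
        · exact σ.nonempty b (hsubABCD b (by tauto))
      · exact (partition_iff bs').2 ⟨hpw, hcov⟩
      · -- strict objective decrease
        show batchObj q w bs' < batchObj q w σ.batches
        rw [hdec, hbs']
        simp only [batchObj_append, batchObj_cons, Wt_append, Wt_cons, Tt_append, Tt_cons,
          hxj, hyj, hsing, Finset.sum_singleton]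
        rw [Finset.sum_insert hix]
        have hTtC : (0:ℝ) ≤ Tt q C := Tt_nonneg q hq0 C
        have hWtD : (0:ℝ) ≤ Wt w D := Wt_nonneg w hw0 D
        nlinarith [mul_pos (hq j) (hw i), mul_nonneg hTtC (hw0 i), mul_nonneg (hq0 j) hWtD]
    · -- move job i from y to x
      have hynotsub : ¬ (y.2 ⊆ {i}) := fun hsub =>
        hsing (Finset.Subset.antisymm hsub (Finset.singleton_subset_iff.2 hiy))
      obtain ⟨i', hi', hni⟩ := Finset.not_subset.1 hynotsub
      set bs' : List (Batch ι m) := A ++ (j, insert i x.2) :: (C ++ (j, y.2.erase i) :: D)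
        with hbs'
      have hpw : bs'.Pairwise fun a b => Disjoint a.2 b.2 := by
        apply pairwise_exchange (x := x) (y := y) _ _ _ hdisjdec
        · intro i0 hi0
          rcases Finset.mem_insert.1 hi0 with rfl | hi0
          · exact Finset.mem_union_right _ hiy
          · exact Finset.mem_union_left _ hi0
        · exact Finset.erase_subset _ _
        · show Disjoint (insert i x.2) (y.2.erase i)
          rw [Finset.disjoint_left]
          intro a ha hae
          rcases Finset.mem_insert.1 ha with rfl | ha
          · exact (Finset.mem_erase.1 hae).1 rfl
          · exact Finset.disjoint_left.1 hxy ha (Finset.mem_of_mem_erase hae)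
      have hcov : ∀ i0 : ι, ∃ b ∈ bs', i0 ∈ b.2 := by
        intro i0
        obtain ⟨b, hb, hib⟩ := cover σ i0
        rw [hdec] at hb
        simp only [List.mem_append, List.mem_cons] at hb
        rcases hb with hb | hbx | hb | hby | hb
        · exact ⟨b, by simp [hbs', hb], hib⟩
        · rw [hbx] at hib
          exact ⟨(j, insert i x.2), by simp [hbs'], Finset.mem_insert_of_mem hib⟩
        · exact ⟨b, by simp [hbs', hb], hib⟩
        · rw [hby] at hib
          by_cases hii : i0 = i
          · subst hii
            exact ⟨(j, insert i0 x.2), by simp [hbs'], Finset.mem_insert_self _ _⟩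
          · exact ⟨(j, y.2.erase i), by simp [hbs'], Finset.mem_erase.2 ⟨hii, hib⟩⟩
        · exact ⟨b, by simp [hbs', hb], hib⟩
      refine absurd (hopt ⟨bs', ?_, ?_, ?_, ?_⟩) (not_le.2 ?_)
      · intro b hb
        rw [hbs'] at hb
        simp only [List.mem_append, List.mem_cons] at hb
        rcases hb with hb | rfl | hb | rfl | hb
        · exact σ.mem_family b (hsubABCD b (by tauto))
        · intro i0 hi0; exact hfamx' i0 hi0
        · exact σ.mem_family b (hsubABCD b (by tauto))
        · intro i0 hi0
          rw [σ.mem_family y hybs i0 (Finset.mem_of_mem_erase hi0), hyj]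
        · exact σ.mem_family b (hsubABCD b (by tauto))
      · intro b hb
        rw [hbs'] at hb
        simp only [List.mem_append, List.mem_cons] at hb
        rcases hb with hb | rfl | hb | rfl | hb
        · exact σ.capacity b (hsubABCD b (by tauto))
        · exact hcapx'
        · exact σ.capacity b (hsubABCD b (by tauto))
        · refine le_trans (Finset.sum_le_sum_of_subset_of_nonneg
            (Finset.erase_subset _ _) (fun i0 _ _ => hv0 i0)) (σ.capacity y hybs)
        · exact σ.capacity b (hsubABCD b (by tauto))
      · intro b hb
        rw [hbs'] at hb
        simp only [List.mem_append, List.mem_cons] at hb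
        rcases hb with hb | rfl | hb | rfl | hb
        · exact σ.nonempty b (hsubABCD b (by tauto))
        · exact Finset.insert_nonempty _ _
        · exact σ.nonempty b (hsubABCD b (by tauto))
        · exact ⟨i', Finset.mem_erase.2 ⟨by simpa using hni, hi'⟩⟩
        · exact σ.nonempty b (hsubABCD b (by tauto))
      · exact (partition_iff bs').2 ⟨hpw, hcov⟩
      · show batchObj q w bs' < batchObj q w σ.batches
        rw [hdec, hbs']
        simp only [batchObj_append, batchObj_cons, Wt_append, Wt_cons, Tt_append, Tt_cons,
          hxj, hyj]
        rw [Finset.sum_insert hix,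
          show (∑ i' ∈ y.2.erase i, w i') = (∑ i' ∈ y.2, w i') - w i from by linarith [herase]]
        have hTtC : (0:ℝ) ≤ Tt q C := Tt_nonneg q hq0 C
        nlinarith [mul_pos (hq j) (hw i), mul_nonneg hTtC (hw0 i)]
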